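/- Let α_{j,k} = ∫∫_{ℝ²} φ_{k-1}(x) φ_{j-1}(y) sgn(x-y) dx dy with φ_j the oscillator wave functions, and set α_{0,k} = 0. Then √(j-1) α_{j-1,k} - √j α_{j+1,k} = 2√2 δ_{jk} for all positive integers j, k. -/

import Mathlib

open MeasureTheory

/-- Physicists' Hermite polynomials. -/
noncomputable def hermiteP : ℕ → ℝ → ℝ
  | 0 => fun _ => 1
  | 1 => fun x => 2 * x
  | (n + 2) => fun x => 2 * x * hermiteP (n + 1) x - 2 * ((n : ℝ) + 1) * hermiteP n x

lemma hermiteP_zero (x : ℝ) : hermiteP 0 x = 1 := rfl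
lemma hermiteP_one (x : ℝ) : hermiteP 1 x = 2 * x := rfl
lemma hermiteP_two (n : ℕ) (x : ℝ) :
    hermiteP (n + 2) x = 2 * x * hermiteP (n + 1) x - 2 * ((n : ℝ) + 1) * hermiteP n x := rfl

lemma hermiteP_rec (n : ℕ) (x : ℝ) :
    hermiteP (n + 1) x = 2 * x * hermiteP n x - 2 * (n : ℝ) * hermiteP (n - 1) x := by
  cases n with
  | zero => simp [hermiteP_one, hermiteP_zero]
  | succ m => simpa using hermiteP_two m x

lemma hermiteP_hasDerivAt (n : ℕ) (x : ℝ) :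
    HasDerivAt (hermiteP n) (2 * (n : ℝ) * hermiteP (n - 1) x) x := by
  induction n using Nat.strong_induction_on generalizing x with
  | _ n ih =>
    match n with
    | 0 =>
      have h0 : HasDerivAt (hermiteP 0) 0 x := hasDerivAt_const x (1:ℝ)
      simpa using h0
    | 1 =>
      have : HasDerivAt (hermiteP 1) 2 x := by
        have h := (hasDerivAt_id x).const_mul (2:ℝ)
        rw [mul_one] at h
        exact h
      simpa [hermiteP_zero] using this
    | (m + 2) =>
      have h1 : HasDerivAt (hermiteP (m + 1)) (2 * ((m:ℝ) + 1) * hermiteP m x) x := by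
        simpa using ih (m+1) (by omega) (x := x)
      have h0 : HasDerivAt (hermiteP m) (2 * (m:ℝ) * hermiteP (m - 1) x) x := ih m (by omega) x
      have hx : HasDerivAt (fun y : ℝ => 2 * y) 2 x := by
        simpa using (hasDerivAt_id x).const_mul (2:ℝ)
      have h : HasDerivAt (fun y => 2 * y * hermiteP (m + 1) y - 2 * ((m:ℝ)+1) * hermiteP m y)
          (2 * hermiteP (m+1) x + 2 * x * (2 * ((m:ℝ) + 1) * hermiteP m x)
            - 2 * ((m:ℝ)+1) * (2 * (m:ℝ) * hermiteP (m - 1) x)) x := by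
        exact ((hx.mul h1).sub (h0.const_mul (2 * ((m:ℝ)+1)))).congr_deriv (by ring)
      have : HasDerivAt (hermiteP (m + 2))
          (2 * hermiteP (m+1) x + 2 * x * (2 * ((m:ℝ) + 1) * hermiteP m x)
            - 2 * ((m:ℝ)+1) * (2 * (m:ℝ) * hermiteP (m - 1) x)) x := by
        apply h.congr_of_eventuallyEq
        filter_upwards with y
        rw [hermiteP_two]
      convert this using 1
      have hr := hermiteP_rec m x
      have he : m + 2 - 1 = m + 1 := rfl
      rw [he]
      push_cast
      linear_combination (2 * (m:ℝ) + 2) * hr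

lemma hermiteP_continuous (n : ℕ) : Continuous (hermiteP n) :=
  continuous_iff_continuousAt.2 fun x => (hermiteP_hasDerivAt n x).differentiableAt.continuousAt

/-- functions that are (evaluations of) polynomials -/
def PF (f : ℝ → ℝ) : Prop := ∃ P : Polynomial ℝ, ∀ x, f x = P.eval x

lemma PF.add {f g : ℝ → ℝ} (hf : PF f) (hg : PF g) : PF (fun x => f x + g x) := by
  obtain ⟨P, hP⟩ := hf; obtain ⟨Q, hQ⟩ := hg
  exact ⟨P + Q, fun x => by simp [hP, hQ]⟩

lemma PF.sub {f g : ℝ → ℝ} (hf : PF f) (hg : PF g) : PF (fun x => f x - g x) := by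
  obtain ⟨P, hP⟩ := hf; obtain ⟨Q, hQ⟩ := hg
  exact ⟨P - Q, fun x => by simp [hP, hQ]⟩

lemma PF.mul {f g : ℝ → ℝ} (hf : PF f) (hg : PF g) : PF (fun x => f x * g x) := by
  obtain ⟨P, hP⟩ := hf; obtain ⟨Q, hQ⟩ := hg
  exact ⟨P * Q, fun x => by simp [hP, hQ]⟩

lemma PF.const (c : ℝ) : PF (fun _ => c) := ⟨Polynomial.C c, fun x => by simp⟩

lemma PF.id : PF (fun x : ℝ => x) := ⟨Polynomial.X, fun x => by simp⟩

lemma PF.const_mul {f : ℝ → ℝ} (hf : PF f) (c : ℝ) : PF (fun x => c * f x) :=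
  (PF.const c).mul hf

lemma PF_hermiteP (n : ℕ) : PF (hermiteP n) := by
  induction n using Nat.strong_induction_on with
  | _ n ih =>
    match n with
    | 0 => exact ⟨1, fun x => by simp [hermiteP_zero]⟩
    | 1 => exact ⟨Polynomial.C 2 * Polynomial.X, fun x => by simp [hermiteP_one]⟩
    | (m + 2) =>
      have h1 := ih (m + 1) (by omega)
      have h0 := ih m (by omega)
      have : PF (fun x => 2 * x * hermiteP (m+1) x - 2 * ((m:ℝ)+1) * hermiteP m x) :=
        (((PF.const 2).mul PF.id).mul h1).sub (h0.const_mul (2 * ((m:ℝ)+1)))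
      obtain ⟨P, hP⟩ := this
      exact ⟨P, fun x => by rw [hermiteP_two]; exact hP x⟩

lemma integrable_pow_gauss {b : ℝ} (hb : 0 < b) (n : ℕ) :
    Integrable fun x : ℝ => x ^ n * Real.exp (-b * x ^ 2) := by
  have := integrable_rpow_mul_exp_neg_mul_sq hb (s := (n : ℝ))
    (by exact_mod_cast neg_one_lt_zero.trans_le (Nat.cast_nonneg n))
  simpa [Real.rpow_natCast] using this

lemma integrable_polyeval_gauss (P : Polynomial ℝ) {b : ℝ} (hb : 0 < b) :
    Integrable fun x : ℝ => P.eval x * Real.exp (-b * x ^ 2) := by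
  induction P using Polynomial.induction_on' with
  | add p q hp hq => simpa [add_mul, Pi.add_def] using hp.add hq
  | monomial k a =>
      simpa [Polynomial.eval_monomial, mul_assoc] using (integrable_pow_gauss hb k).const_mul a

lemma PF.integrable_gauss {f : ℝ → ℝ} (hf : PF f) {b : ℝ} (hb : 0 < b) :
    Integrable fun x : ℝ => f x * Real.exp (-b * x ^ 2) := by
  obtain ⟨P, hP⟩ := hf
  exact (integrable_polyeval_gauss P hb).congr
    (Filter.Eventually.of_forall fun x => by simp only []; rw [hP x])

/-- The normalization constant. -/
noncomputable def Cc (n : ℕ) : ℝ :=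
  (Real.sqrt (2 ^ n * (n.factorial : ℝ) * Real.sqrt Real.pi))⁻¹

/-- The oscillator wave functions `φ_j(x) = (2^j j! √π)^{-1/2} e^{-x²/2} H_j(x)`. -/
noncomputable def phi (j : ℕ) (x : ℝ) : ℝ :=
  (Real.sqrt (2 ^ j * (j.factorial : ℝ) * Real.sqrt Real.pi))⁻¹ *
    Real.exp (-x ^ 2 / 2) * hermiteP j x

lemma phi_eq (n : ℕ) (x : ℝ) : phi n x = Cc n * Real.exp (-x ^ 2 / 2) * hermiteP n x := rfl

lemma Kpos (n : ℕ) : 0 < 2 ^ n * (n.factorial : ℝ) * Real.sqrt Real.pi := by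
  have : (0:ℝ) < Real.sqrt Real.pi := Real.sqrt_pos.2 Real.pi_pos
  positivity

lemma Cc_pos (n : ℕ) : 0 < Cc n := by
  unfold Cc
  exact inv_pos.2 (Real.sqrt_pos.2 (Kpos n))

lemma Cc_succ (n : ℕ) : Cc n = Real.sqrt 2 * Real.sqrt ((n : ℝ) + 1) * Cc (n + 1) := by
  unfold Cc
  have hK : (2:ℝ) ^ (n+1) * ((n+1).factorial : ℝ) * Real.sqrt Real.pi
      = (2 * ((n:ℝ)+1)) * (2 ^ n * (n.factorial : ℝ) * Real.sqrt Real.pi) := by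
    rw [Nat.factorial_succ]
    push_cast
    ring
  rw [hK, Real.sqrt_mul (show (0:ℝ) ≤ 2*((n:ℝ)+1) by positivity)
      (2 ^ n * (n.factorial:ℝ) * Real.sqrt Real.pi),
    Real.sqrt_mul (show (0:ℝ) ≤ 2 by norm_num) ((n:ℝ)+1)]
  have h1 : Real.sqrt 2 ≠ 0 := ne_of_gt (Real.sqrt_pos.2 (by norm_num))
  have h2 : Real.sqrt ((n:ℝ)+1) ≠ 0 := ne_of_gt (Real.sqrt_pos.2 (by positivity))
  have h3 : Real.sqrt (2 ^ n * (n.factorial : ℝ) * Real.sqrt Real.pi) ≠ 0 :=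
    ne_of_gt (Real.sqrt_pos.2 (Kpos n))
  field_simp

lemma exp_gauss_hasDerivAt (x : ℝ) :
    HasDerivAt (fun y : ℝ => Real.exp (-y ^ 2 / 2)) (-x * Real.exp (-x ^ 2 / 2)) x := by
  have h : HasDerivAt (fun y : ℝ => -y ^ 2 / 2) (-x) x := by
    have := ((hasDerivAt_pow 2 x).neg.div_const 2)
    simpa using this.congr_deriv (by push_cast; ring)
  simpa [mul_comm] using h.exp

noncomputable def phiD (n : ℕ) (x : ℝ) : ℝ :=
  Cc n * Real.exp (-x ^ 2 / 2) * (2 * (n : ℝ) * hermiteP (n - 1) x - x * hermiteP n x)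

lemma phi_hasDerivAt (n : ℕ) (x : ℝ) : HasDerivAt (phi n) (phiD n x) x := by
  have h := ((exp_gauss_hasDerivAt x).const_mul (Cc n)).mul (hermiteP_hasDerivAt n x)
  have : phi n = fun y => Cc n * Real.exp (-y ^ 2 / 2) * hermiteP n y := rfl
  rw [this]
  refine h.congr_deriv ?_
  unfold phiD
  ring

lemma sqrt_two_sq : Real.sqrt 2 * Real.sqrt 2 = 2 := Real.mul_self_sqrt (by norm_num)

lemma phi_rec (n : ℕ) (x : ℝ) :
    Real.sqrt 2 * phiD n x
      = Real.sqrt (n : ℝ) * phi (n - 1) x - Real.sqrt ((n : ℝ) + 1) * phi (n + 1) x := by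
  cases n with
  | zero =>
      have hc : Cc 0 = Real.sqrt 2 * Cc 1 := by
        have := Cc_succ 0; norm_num at this; exact this
      simp only [phiD, phi_eq, hermiteP_zero, hermiteP_one, Nat.cast_zero, Nat.zero_sub,
        Real.sqrt_zero, zero_add, Real.sqrt_one, mul_one, one_mul, zero_mul, zero_sub]
      rw [hc]
      linear_combination (-(x * Real.exp (-x ^ 2 / 2) * Cc 1)) * sqrt_two_sq
  | succ m =>
      have hc1 : Cc m = Real.sqrt 2 * Real.sqrt ((m:ℝ)+1) * Cc (m+1) := Cc_succ m
      have hc2 : Cc (m+1) = Real.sqrt 2 * Real.sqrt ((m:ℝ)+2) * Cc (m+2) := by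
        have h := Cc_succ (m+1)
        have e : (((m+1:ℕ)):ℝ) + 1 = (m:ℝ) + 2 := by push_cast; ring
        rw [e] at h; exact h
      have hH : hermiteP (m+1+1) x
          = 2*x*hermiteP (m+1) x - 2*((m:ℝ)+1)*hermiteP m x := hermiteP_two m x
      have ha : Real.sqrt ((m:ℝ)+1) * Real.sqrt ((m:ℝ)+1) = (m:ℝ)+1 :=
        Real.mul_self_sqrt (by positivity)
      have hm1 : m + 1 - 1 = m := rfl
      simp only [phiD, phi_eq, hm1, hH]
      push_cast
      have e : (m:ℝ) + 1 + 1 = (m:ℝ) + 2 := by ring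
      rw [e, hc1, hc2]
      set s := Real.sqrt 2
      set a := Real.sqrt ((m:ℝ)+1)
      set b := Real.sqrt ((m:ℝ)+2)
      set C := Cc (m+2)
      set g := Real.exp (-x^2/2)
      set P := hermiteP m x
      set Q := hermiteP (m+1) x
      linear_combination (b*C*g*(2*((m:ℝ)+1)*P - x*Q) - a*a*b*C*g*P) * sqrt_two_sq
        - 2*b*C*g*P * ha

lemma integrable_PF_gg {f : ℝ → ℝ} (hf : PF f) :
    Integrable fun x : ℝ => f x * Real.exp (-x ^ 2) := by
  have := hf.integrable_gauss (b := 1) one_pos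
  simpa using this

noncomputable def Jint (m n : ℕ) : ℝ :=
  ∫ x : ℝ, hermiteP m x * hermiteP n x * Real.exp (-x ^ 2)

lemma vD (n : ℕ) (x : ℝ) :
    HasDerivAt (fun y => -(hermiteP n y * Real.exp (-y ^ 2)))
      (hermiteP (n + 1) x * Real.exp (-x ^ 2)) x := by
  have hg : HasDerivAt (fun y : ℝ => Real.exp (-y ^ 2)) (-(2 * x) * Real.exp (-x ^ 2)) x := by
    have h : HasDerivAt (fun y : ℝ => -y ^ 2) (-(2 * x)) x := by
      exact (hasDerivAt_pow 2 x).neg.congr_deriv (by simp)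
    simpa [mul_comm] using h.exp
  have h := ((hermiteP_hasDerivAt n x).mul hg).neg
  refine h.congr_deriv (Eq.symm ?_)
  linear_combination Real.exp (-x ^ 2) * hermiteP_rec n x

lemma J_succ (m n : ℕ) : Jint (m + 1) (n + 1) = 2 * ((m : ℝ) + 1) * Jint m n := by
  have hu : ∀ x : ℝ, HasDerivAt (hermiteP (m + 1)) (2 * ((m : ℝ) + 1) * hermiteP m x) x := by
    intro x
    have := hermiteP_hasDerivAt (m + 1) x
    simpa using this
  have huv' : Integrable (hermiteP (m+1) * fun x => hermiteP (n+1) x * Real.exp (-x ^ 2)) := by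
    have := integrable_PF_gg ((PF_hermiteP (m+1)).mul (PF_hermiteP (n+1)))
    exact this.congr (Filter.Eventually.of_forall fun x => by simp [Pi.mul_apply]; ring)
  have hu'v : Integrable ((fun x => 2 * ((m : ℝ) + 1) * hermiteP m x)
      * fun x => -(hermiteP n x * Real.exp (-x ^ 2))) := by
    have := integrable_PF_gg (((PF_hermiteP m).mul (PF_hermiteP n)).const_mul
      (-(2 * ((m : ℝ) + 1))))
    exact this.congr (Filter.Eventually.of_forall fun x => by simp [Pi.mul_apply]; ring)
  have huv : Integrable (hermiteP (m+1) * fun x => -(hermiteP n x * Real.exp (-x ^ 2))) := by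
    have := integrable_PF_gg (((PF_hermiteP (m+1)).mul (PF_hermiteP n)).const_mul (-1))
    exact this.congr (Filter.Eventually.of_forall fun x => by simp [Pi.mul_apply]; ring)
  have key := integral_mul_deriv_eq_deriv_mul_of_integrable (fun x _ => hu x) (fun x _ => vD n x) huv' hu'v huv
  have e1 : (∫ x : ℝ, hermiteP (m+1) x * (hermiteP (n+1) x * Real.exp (-x ^ 2)))
      = Jint (m+1) (n+1) :=
    integral_congr_ae (Filter.Eventually.of_forall fun x => by simp only []; ring)
  have e2 : (∫ x : ℝ, (2 * ((m : ℝ) + 1) * hermiteP m x)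
        * (-(hermiteP n x * Real.exp (-x ^ 2))))
      = -(2 * ((m : ℝ) + 1)) * Jint m n := by
    rw [show (fun x : ℝ => (2 * ((m : ℝ) + 1) * hermiteP m x)
          * (-(hermiteP n x * Real.exp (-x ^ 2))))
        = fun x : ℝ => (-(2 * ((m : ℝ) + 1)))
          * (hermiteP m x * hermiteP n x * Real.exp (-x ^ 2)) from funext fun x => by ring]
    rw [integral_const_mul]
    rfl
  rw [e1, e2] at key
  rw [key]; ring

lemma J_left_zero (m : ℕ) : Jint (m + 1) 0 = 0 := by
  have hu : ∀ x : ℝ, HasDerivAt (fun _ : ℝ => (1:ℝ)) ((fun _ : ℝ => (0:ℝ)) x) x :=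
    fun x => hasDerivAt_const x 1
  have huv' : Integrable ((fun _ : ℝ => (1:ℝ))
      * fun x => hermiteP (m+1) x * Real.exp (-x ^ 2)) := by
    have := integrable_PF_gg (PF_hermiteP (m+1))
    exact this.congr (Filter.Eventually.of_forall fun x => by simp [Pi.mul_apply])
  have hu'v : Integrable ((fun _ : ℝ => (0:ℝ))
      * fun x => -(hermiteP m x * Real.exp (-x ^ 2))) := by
    have : ((fun _ : ℝ => (0:ℝ)) * fun x => -(hermiteP m x * Real.exp (-x ^ 2)))
        = fun _ : ℝ => (0:ℝ) := funext fun x => by simp [Pi.mul_apply]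
    rw [this]
    exact integrable_zero _ _ _
  have huv : Integrable ((fun _ : ℝ => (1:ℝ))
      * fun x => -(hermiteP m x * Real.exp (-x ^ 2))) := by
    have := integrable_PF_gg ((PF_hermiteP m).const_mul (-1))
    exact this.congr (Filter.Eventually.of_forall fun x => by
      simp only [Pi.mul_apply]; ring)
  have key := integral_mul_deriv_eq_deriv_mul_of_integrable (fun x _ => hu x) (fun x _ => vD m x) huv' hu'v huv
  simp only [one_mul, zero_mul, integral_zero, neg_zero] at key
  rw [← key]
  unfold Jint
  exact integral_congr_ae (Filter.Eventually.of_forall fun x => by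
    simp [hermiteP_zero])

lemma J_symm (m n : ℕ) : Jint m n = Jint n m :=
  integral_congr_ae (Filter.Eventually.of_forall fun x => by simp only []; ring)

lemma J_eq (m n : ℕ) :
    Jint m n = if m = n then 2 ^ n * (n.factorial : ℝ) * Real.sqrt Real.pi else 0 := by
  induction m generalizing n with
  | zero =>
      cases n with
      | zero =>
          have : Jint 0 0 = ∫ x : ℝ, Real.exp (-1 * x ^ 2) :=
            integral_congr_ae (Filter.Eventually.of_forall fun x => by
              norm_num [hermiteP_zero])
          rw [this, integral_gaussian]
          simp
      | succ n =>
          rw [J_symm, J_left_zero]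
          simp
  | succ m ih =>
      cases n with
      | zero =>
          rw [J_left_zero]
          simp
      | succ n =>
          rw [J_succ, ih n]
          by_cases h : m = n
          · subst h
            simp only [if_pos rfl]
            rw [Nat.factorial_succ]
            push_cast
            ring
          · simp [h, fun hc : m + 1 = n + 1 => h (Nat.succ_injective hc)]

lemma exp_half_mul_self (x : ℝ) :
    Real.exp (-x ^ 2 / 2) * Real.exp (-x ^ 2 / 2) = Real.exp (-x ^ 2) := by
  rw [← Real.exp_add]; congr 1; ring

lemma integrable_phi (n : ℕ) : Integrable (phi n) := by
  have h := (((PF_hermiteP n).const_mul (Cc n))).integrable_gauss (b := (1:ℝ)/2) (by norm_num)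
  refine h.congr (Filter.Eventually.of_forall fun x => ?_)
  simp only [phi_eq]
  rw [show -(1/2 : ℝ) * x ^ 2 = -x ^ 2 / 2 by ring]
  ring

lemma integrable_phiD (n : ℕ) : Integrable (phiD n) := by
  have hp : PF fun x => Cc n * (2 * (n:ℝ) * hermiteP (n-1) x - x * hermiteP n x) :=
    (((PF.const (2 * (n:ℝ))).mul (PF_hermiteP (n-1))).sub
      (PF.id.mul (PF_hermiteP n))).const_mul (Cc n)
  have h := hp.integrable_gauss (b := (1:ℝ)/2) (by norm_num)
  refine h.congr (Filter.Eventually.of_forall fun x => ?_)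
  simp only [phiD]
  rw [show -(1/2 : ℝ) * x ^ 2 = -x ^ 2 / 2 by ring]
  ring

lemma integrable_phi_mul_phi (m n : ℕ) : Integrable fun x => phi m x * phi n x := by
  have h := integrable_PF_gg (((PF_hermiteP m).mul (PF_hermiteP n)).const_mul (Cc m * Cc n))
  refine h.congr (Filter.Eventually.of_forall fun x => ?_)
  simp only [phi_eq]
  rw [← exp_half_mul_self x]
  ring

lemma integral_phi_mul_phi (m n : ℕ) :
    (∫ x : ℝ, phi m x * phi n x) = if m = n then 1 else 0 := by
  have e : (∫ x : ℝ, phi m x * phi n x)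
      = Cc m * Cc n * Jint m n := by
    rw [show (fun x : ℝ => phi m x * phi n x)
        = fun x : ℝ => (Cc m * Cc n) * (hermiteP m x * hermiteP n x * Real.exp (-x ^ 2)) from
        funext fun x => by
          simp only [phi_eq]; rw [← exp_half_mul_self x]; ring]
    rw [integral_const_mul]
    rfl
  rw [e, J_eq]
  by_cases h : m = n
  · subst h
    simp only [if_pos rfl]
    unfold Cc
    rw [← mul_inv, Real.mul_self_sqrt (Kpos m).le]
    exact inv_mul_cancel₀ (Kpos m).ne'
  · simp [h]

lemma measurable_sign_real : Measurable Real.sign := by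
  have : Real.sign = fun r : ℝ => if r < 0 then (-1:ℝ) else if 0 < r then 1 else 0 :=
    funext fun r => rfl
  rw [this]
  exact Measurable.ite (measurableSet_lt measurable_id measurable_const) measurable_const
    (Measurable.ite (measurableSet_lt measurable_const measurable_id) measurable_const
      measurable_const)

lemma abs_sign_le_one (t : ℝ) : ‖Real.sign t‖ ≤ 1 := by
  rcases Real.sign_apply_eq t with h | h | h <;> rw [h] <;> norm_num

lemma integrable_phi_sign (l : ℕ) (y : ℝ) :
    Integrable fun x => phi l x * Real.sign (x - y) := by
  have hm : Measurable fun x : ℝ => Real.sign (x - y) :=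
    measurable_sign_real.comp (measurable_id.sub measurable_const)
  have h := (integrable_phi l).bdd_mul (f := fun x : ℝ => Real.sign (x - y))
    hm.aestronglyMeasurable (Filter.Eventually.of_forall fun x => abs_sign_le_one _)
  exact h.congr (Filter.Eventually.of_forall fun x => by ring)

/-- The function `F_l(y) = ∫ φ_l(x) sgn(x-y) dx`, in closed form. -/
noncomputable def Phint (l : ℕ) (y : ℝ) : ℝ :=
  (∫ x : ℝ, phi l x) - 2 * ∫ x in Set.Iic y, phi l x

lemma sign_integral_eq (l : ℕ) (y : ℝ) :
    (∫ x : ℝ, phi l x * Real.sign (x - y)) = Phint l y := by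
  have hint := integrable_phi_sign l y
  have htot := integrable_phi l
  have hsplit := intervalIntegral.integral_Iic_add_Ioi (b := y) hint.integrableOn hint.integrableOn
  have h1 : (∫ x in Set.Ioi y, phi l x * Real.sign (x - y)) = ∫ x in Set.Ioi y, phi l x := by
    refine setIntegral_congr_ae measurableSet_Ioi (Filter.Eventually.of_forall fun x hx => ?_)
    rw [Real.sign_of_pos (by simp only [Set.mem_Ioi] at hx; linarith), mul_one]
  have hae : ∀ᵐ x : ℝ, x ≠ y := by
    rw [MeasureTheory.ae_iff]
    simp only [ne_eq, not_not]
    simpa using measure_singleton (μ := (volume : Measure ℝ)) y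
  have h2 : (∫ x in Set.Iic y, phi l x * Real.sign (x - y)) = ∫ x in Set.Iic y, -phi l x := by
    refine setIntegral_congr_ae measurableSet_Iic ?_
    filter_upwards [hae] with x hx hxin
    have : x < y := lt_of_le_of_ne hxin hx
    rw [Real.sign_of_neg (by linarith), mul_neg_one]
  have h3 : (∫ x in Set.Iic y, phi l x) + (∫ x in Set.Ioi y, phi l x) = ∫ x : ℝ, phi l x :=
    intervalIntegral.integral_Iic_add_Ioi htot.integrableOn htot.integrableOn
  rw [h1, h2, integral_neg] at hsplit
  unfold Phint
  linarith

lemma Phint_hasDerivAt (l : ℕ) (y : ℝ) : HasDerivAt (Phint l) (-2 * phi l y) y := by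
  have hIic : ∀ z : ℝ, (∫ x in Set.Iic z, phi l x)
      = (∫ x in Set.Iic (0:ℝ), phi l x) + ∫ x in (0:ℝ)..z, phi l x := by
    intro z
    have := intervalIntegral.integral_Iic_sub_Iic ((integrable_phi l).integrableOn)
      ((integrable_phi l).integrableOn) (a := (0:ℝ)) (b := z)
    linarith
  have hc : Continuous (phi l) := continuous_iff_continuousAt.2 fun x =>
    ((phi_hasDerivAt l x).differentiableAt).continuousAt
  have hftc : HasDerivAt (fun z => ∫ x in (0:ℝ)..z, phi l x) (phi l y) y := by
    refine intervalIntegral.integral_hasDerivAt_right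
      ((integrable_phi l).intervalIntegrable) ?_ hc.continuousAt
    exact hc.aestronglyMeasurable.stronglyMeasurableAtFilter
  have h2 : HasDerivAt (fun z => ∫ x in Set.Iic z, phi l x) (phi l y) y := by
    have := ((hasDerivAt_const y (∫ x in Set.Iic (0:ℝ), phi l x)).add hftc)
    refine HasDerivAt.congr_of_eventuallyEq (by simpa using this) ?_
    filter_upwards with z
    rw [hIic z]
    rfl
  have h3 := ((hasDerivAt_const y (∫ x : ℝ, phi l x)).sub (h2.const_mul 2))
  refine HasDerivAt.congr_of_eventuallyEq (by simpa [Phint] using h3.congr_deriv (by ring)) ?_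
  filter_upwards with z
  rfl

lemma Phint_continuous (l : ℕ) : Continuous (Phint l) :=
  continuous_iff_continuousAt.2 fun y => ((Phint_hasDerivAt l y).differentiableAt).continuousAt

lemma Phint_bound (l : ℕ) (y : ℝ) : ‖Phint l y‖ ≤ ∫ x : ℝ, ‖phi l x‖ := by
  rw [← sign_integral_eq]
  refine (norm_integral_le_integral_norm _).trans ?_
  refine integral_mono (integrable_phi_sign l y).norm (integrable_phi l).norm fun x => ?_
  rw [norm_mul]
  calc ‖phi l x‖ * ‖Real.sign (x - y)‖ ≤ ‖phi l x‖ * 1 :=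
        mul_le_mul_of_nonneg_left (abs_sign_le_one _) (norm_nonneg _)
    _ = ‖phi l x‖ := mul_one _

lemma integrable_mul_Phint {f : ℝ → ℝ} (hf : Integrable f) (l : ℕ) :
    Integrable fun y => f y * Phint l y := by
  have h := hf.bdd_mul (f := Phint l) (Phint_continuous l).aestronglyMeasurable
    (Filter.Eventually.of_forall (Phint_bound l))
  exact h.congr (Filter.Eventually.of_forall fun x => by ring)

/-- `α_{j,k} = ∫∫ φ_{k-1}(x) φ_{j-1}(y) sgn(x-y) dx dy` for `j, k ≥ 1`,
with the convention `α_{0,k} = α_{j,0} = 0`. -/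
noncomputable def alph (j k : ℕ) : ℝ :=
  if j = 0 ∨ k = 0 then 0
  else ∫ y : ℝ, ∫ x : ℝ, phi (k - 1) x * phi (j - 1) y * Real.sign (x - y)

lemma alph_eq (m l : ℕ) : alph (m + 1) (l + 1) = ∫ y : ℝ, phi m y * Phint l y := by
  unfold alph
  rw [if_neg (by simp)]
  simp only [Nat.add_sub_cancel]
  refine integral_congr_ae (Filter.Eventually.of_forall fun y => ?_)
  simp only []
  rw [show (fun x => phi l x * phi m y * Real.sign (x - y))
      = fun x => phi m y * (phi l x * Real.sign (x - y)) from funext fun x => by ring,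
    integral_const_mul, sign_integral_eq]

lemma alph_sqrt (m l : ℕ) :
    Real.sqrt (m : ℝ) * alph m (l + 1)
      = ∫ y : ℝ, Real.sqrt (m : ℝ) * phi (m - 1) y * Phint l y := by
  cases m with
  | zero => simp [alph]
  | succ p =>
      rw [alph_eq p l, ← integral_const_mul]
      refine integral_congr_ae (Filter.Eventually.of_forall fun y => ?_)
      simp only [Nat.add_sub_cancel]
      ring

theorem stmt7' (m l : ℕ) :
    Real.sqrt ((m : ℝ)) * alph m (l + 1) - Real.sqrt ((m : ℝ) + 1) * alph (m + 2) (l + 1) =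
      2 * Real.sqrt 2 * (if m = l then 1 else 0) := by
  have t2 : Real.sqrt ((m : ℝ) + 1) * alph (m + 2) (l + 1)
      = ∫ y : ℝ, Real.sqrt ((m : ℝ) + 1) * phi (m + 1) y * Phint l y := by
    rw [alph_eq (m + 1) l, ← integral_const_mul]
    refine integral_congr_ae (Filter.Eventually.of_forall fun y => ?_)
    ring
  have i1 : Integrable fun y => Real.sqrt (m : ℝ) * phi (m - 1) y * Phint l y := by
    have := integrable_mul_Phint ((integrable_phi (m - 1)).const_mul (Real.sqrt (m : ℝ))) l
    exact this.congr (Filter.Eventually.of_forall fun y => by ring)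
  have i2 : Integrable fun y => Real.sqrt ((m : ℝ) + 1) * phi (m + 1) y * Phint l y := by
    have := integrable_mul_Phint ((integrable_phi (m + 1)).const_mul (Real.sqrt ((m:ℝ) + 1))) l
    exact this.congr (Filter.Eventually.of_forall fun y => by ring)
  rw [alph_sqrt m l, t2, ← integral_sub i1 i2]
  have e : (∫ y : ℝ, (Real.sqrt (m : ℝ) * phi (m - 1) y * Phint l y
        - Real.sqrt ((m : ℝ) + 1) * phi (m + 1) y * Phint l y))
      = Real.sqrt 2 * ∫ y : ℝ, Phint l y * phiD m y := by
    rw [← integral_const_mul]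
    refine integral_congr_ae (Filter.Eventually.of_forall fun y => ?_)
    simp only []
    have := phi_rec m y
    linear_combination Phint l y * this.symm
  rw [e]
  have h1 : Integrable (Phint l * phiD m) := by
    have := integrable_mul_Phint (integrable_phiD m) l
    exact this.congr (Filter.Eventually.of_forall fun y => by
      simp only [Pi.mul_apply]; ring)
  have h2 : Integrable ((fun y => -2 * phi l y) * phi m) := by
    have := (integrable_phi_mul_phi l m).const_mul (-2)
    exact this.congr (Filter.Eventually.of_forall fun y => by
      simp only [Pi.mul_apply]; ring)
  have h3 : Integrable (Phint l * phi m) := by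
    have := integrable_mul_Phint (integrable_phi m) l
    exact this.congr (Filter.Eventually.of_forall fun y => by
      simp only [Pi.mul_apply]; ring)
  have key := integral_mul_deriv_eq_deriv_mul_of_integrable
    (u := Phint l) (u' := fun y => -2 * phi l y) (v := phi m) (v' := phiD m)
    (fun y _ => Phint_hasDerivAt l y) (fun y _ => phi_hasDerivAt m y) h1 h2 h3
  rw [key]
  have e2 : (∫ y : ℝ, (-2 * phi l y) * phi m y)
      = -2 * (if l = m then 1 else 0) := by
    rw [show (fun y : ℝ => (-2 * phi l y) * phi m y)
        = fun y : ℝ => (-2 : ℝ) * (phi l y * phi m y) from funext fun y => by ring,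
      integral_const_mul, integral_phi_mul_phi]
  rw [e2]
  by_cases h : m = l
  · subst h; simp; ring
  · simp [h, fun hc : l = m => h hc.symm, Ne.symm h]

/-- `√(j-1) α_{j-1,k} - √j α_{j+1,k} = 2√2 δ_{jk}` for positive integers `j, k`. -/
theorem stmt7 (j k : ℕ) (hj : 0 < j) (hk : 0 < k) :
    Real.sqrt ((j : ℝ) - 1) * alph (j - 1) k - Real.sqrt j * alph (j + 1) k =
      2 * Real.sqrt 2 * (if j = k then 1 else 0) := by
  obtain ⟨m, rfl⟩ : ∃ m, j = m + 1 := ⟨j - 1, (Nat.succ_pred_eq_of_pos hj).symm⟩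
  obtain ⟨l, rfl⟩ : ∃ l, k = l + 1 := ⟨k - 1, (Nat.succ_pred_eq_of_pos hk).symm⟩
  rw [show ((m + 1 : ℕ) : ℝ) - 1 = (m : ℝ) by push_cast; ring,
    show ((m + 1 : ℕ) : ℝ) = (m : ℝ) + 1 by push_cast; ring]
  simp only [Nat.add_sub_cancel]
  rw [show m + 1 + 1 = m + 2 from rfl, stmt7' m l]
  by_cases h : m = l
  · subst h; simp
  · simp [h, fun hc : m + 1 = l + 1 => h (Nat.succ_injective hc)]
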